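/- Let $G$ be a Cameron--Walker graph with bipartite part on $\{v_1,\ldots,v_m\} \cup \{w_1,\ldots,w_n\}$, where each $v_i$ has $s_i \geq 1$ leaf edges and each $w_j$ has $t_j \geq 0$ pendant triangles. Then $\dim K[V(G)]/I(G) = \sum_{i=1}^m s_i + \sum_{j=1}^n \max\{t_j, 1\}$. -/

import Mathlib

section Aux
open Finset

/-- Coquand–Lombardi style chain contradiction. -/
lemma cl_chain {R : Type*} [CommRing R] (ℓ : ℕ) (q : ℕ → Ideal R)
    (hprime : ∀ i ≤ ℓ + 1, (q i).IsPrime)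
    (hmono : ∀ i ≤ ℓ, q i ≤ q (i + 1))
    (x a : ℕ → R) (k : ℕ → ℕ)
    (hx1 : ∀ i ≤ ℓ, x i ∈ q (i + 1)) (hx2 : ∀ i ≤ ℓ, x i ∉ q i)
    (c : R) (hc : IsUnit c)
    (heq : c * (∏ j ∈ Finset.Ico 0 (ℓ + 1), x j ^ k j)
      + ∑ r ∈ Finset.Ico 0 (ℓ + 1), a r * (∏ j ∈ Finset.Ico 0 r, x j ^ k j) * x r ^ (k r + 1)
      = 0) :
    False := by
  set T : ℕ → R := fun i => c * (∏ j ∈ Finset.Ico i (ℓ + 1), x j ^ k j)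
      + ∑ r ∈ Finset.Ico i (ℓ + 1), a r * (∏ j ∈ Finset.Ico i r, x j ^ k j) * x r ^ (k r + 1)
    with hT
  have key : ∀ i, i ≤ ℓ + 1 → T i ∈ q i := by
    intro i
    induction i with
    | zero => intro _; simpa [hT, heq] using (q 0).zero_mem
    | succ i ih =>
      intro hi
      have hiℓ : i ≤ ℓ := Nat.lt_succ_iff.mp hi
      have hTi : T i ∈ q i := ih (le_trans hiℓ (Nat.le_succ ℓ))
      have hfact : T i = x i ^ k i * (T (i + 1) + a i * x i) := by
        have h1 : ∏ j ∈ Finset.Ico i (ℓ + 1), x j ^ k j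
            = x i ^ k i * ∏ j ∈ Finset.Ico (i + 1) (ℓ + 1), x j ^ k j :=
          Finset.prod_eq_prod_Ico_succ_bot (Nat.lt_succ_of_le hiℓ) _
        have h2 : ∑ r ∈ Finset.Ico i (ℓ + 1), a r * (∏ j ∈ Finset.Ico i r, x j ^ k j) * x r ^ (k r + 1)
            = a i * x i ^ (k i + 1)
              + ∑ r ∈ Finset.Ico (i + 1) (ℓ + 1), a r * (x i ^ k i * ∏ j ∈ Finset.Ico (i + 1) r, x j ^ k j) * x r ^ (k r + 1) := by
          rw [Finset.sum_eq_sum_Ico_succ_bot (Nat.lt_succ_of_le hiℓ)]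
          simp only [Finset.Ico_self, Finset.prod_empty, mul_one]
          congr 1
          refine Finset.sum_congr rfl fun r hr => ?_
          rw [Finset.prod_eq_prod_Ico_succ_bot (Finset.mem_Ico.mp hr).1]
        rw [hT]
        simp only [h1, h2]
        rw [mul_add, mul_add, Finset.mul_sum]
        have h3 : ∀ r ∈ Finset.Ico (i+1) (ℓ+1),
            a r * (x i ^ k i * ∏ j ∈ Finset.Ico (i + 1) r, x j ^ k j) * x r ^ (k r + 1)
            = x i ^ k i * ((a r * ∏ j ∈ Finset.Ico (i + 1) r, x j ^ k j) * x r ^ (k r + 1)) :=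
          fun r _ => by ring
        rw [Finset.sum_congr rfl h3]
        ring
      have hne : x i ^ k i ∉ q i := fun h => hx2 i hiℓ ((hprime i (le_trans hiℓ (Nat.le_succ ℓ))).mem_of_pow_mem _ h)
      have := ((hprime i (le_trans hiℓ (Nat.le_succ ℓ))).mem_or_mem (hfact ▸ hTi)).resolve_left hne
      have h3 : T (i + 1) + a i * x i ∈ q (i + 1) := hmono i hiℓ this
      have h4 : a i * x i ∈ q (i + 1) := Ideal.mul_mem_left _ _ (hx1 i hiℓ)
      simpa using Ideal.sub_mem _ h3 h4
  have hc' : c ∈ q (ℓ + 1) := by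
    have := key (ℓ + 1) le_rfl
    simpa [hT] using this
  exact (hprime (ℓ + 1) le_rfl).ne_top (Ideal.eq_top_of_isUnit_mem _ hc' hc)

open Finset MvPolynomial

lemma exists_cl_relation {K R : Type*} [Field K] [CommRing R] [Algebra K R]
    (ℓ : ℕ) (x : ℕ → R) (Q : MvPolynomial (Fin (ℓ + 1)) K) (hQ : Q ≠ 0)
    (h0 : MvPolynomial.aeval (fun i : Fin (ℓ + 1) => x (i : ℕ)) Q = 0) :
    ∃ (c : R) (_ : IsUnit c) (a : ℕ → R) (k : ℕ → ℕ),
      c * (∏ j ∈ Finset.Ico 0 (ℓ + 1), x j ^ k j)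
      + ∑ r ∈ Finset.Ico 0 (ℓ + 1), a r * (∏ j ∈ Finset.Ico 0 r, x j ^ k j) * x r ^ (k r + 1)
      = 0 := by
  classical
  set kf : (Fin (ℓ + 1) →₀ ℕ) → ℕ → ℕ := fun β j => if h : j < ℓ + 1 then β ⟨j, h⟩ else 0 with hkf
  have hkf_eval : ∀ (β : Fin (ℓ + 1) →₀ ℕ) (i : Fin (ℓ + 1)), kf β (i : ℕ) = β i := by
    intro β i; simp [hkf, i.isLt]; have := i.isLt; omega
  have hprod : ∀ β : Fin (ℓ + 1) →₀ ℕ,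
      (∏ i : Fin (ℓ + 1), x (i : ℕ) ^ β i) = ∏ j ∈ Finset.range (ℓ + 1), x j ^ kf β j := by
    intro β
    rw [← Fin.prod_univ_eq_prod_range (fun j => x j ^ kf β j) (ℓ + 1)]
    exact Finset.prod_congr rfl fun i _ => by rw [hkf_eval]
  have hsupp : (Q.support.image (toLex : (Fin (ℓ + 1) →₀ ℕ) → Lex (Fin (ℓ + 1) →₀ ℕ))).Nonempty :=
    (Finset.image_nonempty).mpr (Finset.nonempty_iff_ne_empty.mpr (mt MvPolynomial.support_eq_empty.mp hQ))
  obtain ⟨α, hαmem, hα⟩ := Finset.mem_image.mp (Finset.min'_mem _ hsupp)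
  have hmin : ∀ β ∈ Q.support.erase α, Finsupp.Lex (· < ·) (· < ·) α β := by
    intro β hβ
    obtain ⟨hne, hβs⟩ := Finset.mem_erase.mp hβ
    have hle : toLex α ≤ toLex β := by
      rw [hα]; exact Finset.min'_le _ _ (Finset.mem_image_of_mem _ hβs)
    exact lt_of_le_of_ne hle (fun h => hne (toLex.injective h).symm)
  set pick : (Fin (ℓ + 1) →₀ ℕ) → Fin (ℓ + 1) := fun β =>
    if h : Finsupp.Lex (· < ·) (· < ·) α β then h.choose else ⟨0, Nat.succ_pos ℓ⟩ with hpickdef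
  have hpick : ∀ β, (h : Finsupp.Lex (· < ·) (· < ·) α β) →
      (∀ j, j < pick β → α j = β j) ∧ α (pick β) < β (pick β) := by
    intro β h
    have heq : pick β = h.choose := by rw [hpickdef]; exact dif_pos h
    rw [heq]
    exact ⟨fun j hj => h.choose_spec.1 j hj, h.choose_spec.2⟩
  set k : ℕ → ℕ := kf α with hk
  set rem : (Fin (ℓ + 1) →₀ ℕ) → R := fun β =>
    x ((pick β : ℕ)) ^ (β (pick β) - α (pick β) - 1)
      * ∏ j ∈ Finset.Ico ((pick β : ℕ) + 1) (ℓ + 1), x j ^ kf β j with hrem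
  set a : ℕ → R := fun r =>
    ∑ β ∈ (Q.support.erase α).filter (fun β => ((pick β : ℕ)) = r),
      algebraMap K R (Q.coeff β) * rem β with ha
  set c : R := algebraMap K R (Q.coeff α) with hc
  have hcu : IsUnit c :=
    (Ne.isUnit (by rwa [MvPolynomial.mem_support_iff] at hαmem)).map (algebraMap K R)
  refine ⟨c, hcu, a, k, ?_⟩
  have expand : (0 : R) = ∑ d ∈ Q.support,
      algebraMap K R (Q.coeff d) * ∏ j ∈ Finset.range (ℓ + 1), x j ^ kf d j := by
    rw [← h0, MvPolynomial.aeval_def, MvPolynomial.eval₂_eq']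
    exact Finset.sum_congr rfl fun d _ => by rw [hprod]
  have hterm : ∀ β ∈ Q.support.erase α,
      algebraMap K R (Q.coeff β) * ∏ j ∈ Finset.range (ℓ + 1), x j ^ kf β j
      = ((algebraMap K R (Q.coeff β) * rem β)
          * ∏ j ∈ Finset.range ((pick β : ℕ)), x j ^ k j)
          * x ((pick β : ℕ)) ^ (k ((pick β : ℕ)) + 1) := by
    intro β hβ
    obtain ⟨hjlt, hilt⟩ := hpick β (hmin β hβ)
    have hiL : ((pick β : ℕ)) < ℓ + 1 := (pick β).isLt
    have h1 : ∏ j ∈ Finset.range (ℓ + 1), x j ^ kf β j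
        = (∏ j ∈ Finset.range ((pick β : ℕ)), x j ^ kf β j)
          * (x ((pick β : ℕ)) ^ kf β ((pick β : ℕ))
            * ∏ j ∈ Finset.Ico ((pick β : ℕ) + 1) (ℓ + 1), x j ^ kf β j) := by
      rw [Finset.range_eq_Ico,
        ← Finset.prod_Ico_consecutive _ (Nat.zero_le ((pick β : ℕ))) (le_of_lt hiL),
        Finset.prod_eq_prod_Ico_succ_bot hiL, ← Finset.range_eq_Ico]
    have h2 : ∏ j ∈ Finset.range ((pick β : ℕ)), x j ^ kf β j
        = ∏ j ∈ Finset.range ((pick β : ℕ)), x j ^ k j := by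
      refine Finset.prod_congr rfl fun j hj => ?_
      have hjL : j < ℓ + 1 := lt_trans (Finset.mem_range.mp hj) hiL
      have heq : α ⟨j, hjL⟩ = β ⟨j, hjL⟩ := hjlt ⟨j, hjL⟩ (by
        rw [Fin.lt_def]; exact Finset.mem_range.mp hj)
      simp [hkf, hk, hjL, heq, Nat.lt_succ_iff.mp hjL]
    have h3 : kf β ((pick β : ℕ)) = (k ((pick β : ℕ)) + 1) + (β (pick β) - α (pick β) - 1) := by
      rw [hkf_eval]
      have h4 : k ((pick β : ℕ)) = α (pick β) := hkf_eval α (pick β)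
      rw [h4]
      omega
    rw [h1, h2, h3, pow_add, hrem]
    ring
  have main : c * (∏ j ∈ Finset.range (ℓ + 1), x j ^ k j)
      + ∑ r ∈ Finset.range (ℓ + 1), a r * (∏ j ∈ Finset.range r, x j ^ k j) * x r ^ (k r + 1)
      = 0 := by
    rw [ha]
    have hgroup : ∑ r ∈ Finset.range (ℓ + 1),
        (∑ β ∈ (Q.support.erase α).filter (fun β => ((pick β : ℕ)) = r),
          algebraMap K R (Q.coeff β) * rem β)
          * (∏ j ∈ Finset.range r, x j ^ k j) * x r ^ (k r + 1)
        = ∑ β ∈ Q.support.erase α,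
            algebraMap K R (Q.coeff β) * ∏ j ∈ Finset.range (ℓ + 1), x j ^ kf β j := by
      rw [Finset.sum_congr rfl hterm,
        ← Finset.sum_fiberwise_of_maps_to (g := fun β => ((pick β : ℕ)))
          (t := Finset.range (ℓ + 1)) (fun β _ => Finset.mem_range.mpr (pick β).isLt)]
      refine Finset.sum_congr rfl fun r _ => ?_
      rw [Finset.sum_mul, Finset.sum_mul]
      refine Finset.sum_congr rfl fun β hβ => ?_
      have hr : ((pick β : ℕ)) = r := (Finset.mem_filter.mp hβ).2
      rw [hr]
    rw [hgroup, ← Finset.add_sum_erase _ _ hαmem] at *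
    exact expand.symm
  simpa only [← Finset.range_eq_Ico] using main

open Finset MvPolynomial Module

section

variable (K : Type*) [Field K]

/-- Cardinality of coordinatewise-bounded exponents. -/
noncomputable def boundedEquiv (σ : Type*) [Fintype σ] (N : ℕ) :
    {n : σ →₀ ℕ | ∀ i, n i ≤ N} ≃ (σ → Fin (N + 1)) where
  toFun p i := ⟨p.1 i, Nat.lt_succ_of_le (p.2 i)⟩
  invFun g := ⟨Finsupp.equivFunOnFinite.symm (fun i => (g i : ℕ)), fun i => by
    simp [Finsupp.equivFunOnFinite]
    exact Nat.lt_succ_iff.mp (g i).isLt⟩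
  left_inv p := by
    ext i
    simp [Finsupp.equivFunOnFinite]
  right_inv g := by
    ext i
    simp [Finsupp.equivFunOnFinite]
    rfl

lemma finrank_restrictDegree (σ : Type*) [Fintype σ] (N : ℕ) :
    finrank K (restrictDegree σ K N) = (N + 1) ^ Fintype.card σ := by
  classical
  have e := boundedEquiv σ N
  haveI : Fintype {n : σ →₀ ℕ | ∀ i, n i ≤ N} := Fintype.ofEquiv _ e.symm
  unfold MvPolynomial.restrictDegree
  rw [finrank_eq_card_basis (basisRestrictSupport K {n : σ →₀ ℕ | ∀ i, n i ≤ N})]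
  rw [Fintype.card_congr e]
  simp [Fintype.card_fun]

lemma totalDegree_aeval_le {σ τ : Type*} [Fintype τ] (f : τ → MvPolynomial σ K) (D : ℕ)
    (hD : ∀ i, (f i).totalDegree ≤ D) (p : MvPolynomial τ K) :
    (MvPolynomial.aeval f p).totalDegree ≤ D * p.totalDegree := by
  rw [MvPolynomial.aeval_def, MvPolynomial.eval₂_eq']
  refine (MvPolynomial.totalDegree_finset_sum _ _).trans (Finset.sup_le fun d hd => ?_)
  refine (MvPolynomial.totalDegree_mul _ _).trans ?_
  have h1 : (algebraMap K (MvPolynomial σ K) (MvPolynomial.coeff d p)).totalDegree = 0 :=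
    MvPolynomial.totalDegree_C _
  rw [h1, zero_add]
  refine (MvPolynomial.totalDegree_finset_prod _ _).trans ?_
  have h2 : ∀ i : τ, ((f i) ^ (d i)).totalDegree ≤ d i * D := fun i =>
    (MvPolynomial.totalDegree_pow _ _).trans (Nat.mul_le_mul_left _ (hD i))
  refine (Finset.sum_le_sum fun i _ => h2 i).trans ?_
  rw [← Finset.sum_mul]
  have h3 : ∑ i : τ, d i ≤ p.totalDegree := by
    have h4 : d.sum (fun _ e => e) = ∑ i : τ, d i :=
      Finsupp.sum_fintype d (fun _ e => e) (fun _ => rfl)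
    rw [← h4]
    exact MvPolynomial.le_totalDegree hd
  calc (∑ i : τ, d i) * D ≤ p.totalDegree * D := Nat.mul_le_mul_right _ h3
    _ = D * p.totalDegree := Nat.mul_comm _ _

theorem not_algebraicIndependent (σ : Type*) [Fintype σ]
    (f : Fin (Fintype.card σ + 1) → MvPolynomial σ K) :
    ¬ AlgebraicIndependent K f := by
  classical
  intro hf
  obtain ⟨n, hn⟩ : ∃ n, n = Fintype.card σ := ⟨_, rfl⟩
  set D := (Finset.univ.sup fun i => (f i).totalDegree) + 1 with hD
  have hDf : ∀ i, (f i).totalDegree ≤ D := fun i => by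
    rw [hD]
    exact Nat.le_succ_of_le (Finset.le_sup (f := fun i => (f i).totalDegree) (Finset.mem_univ i))
  set M := (D * (n + 1)) ^ n with hM
  have hinj : Function.Injective (MvPolynomial.aeval f) :=
    algebraicIndependent_iff_injective_aeval.mp hf
  have inc1 : restrictDegree (Fin (Fintype.card σ + 1)) K M
      ≤ restrictTotalDegree (Fin (Fintype.card σ + 1)) K ((n + 1) * M) := by
    intro p hp
    rw [MvPolynomial.mem_restrictTotalDegree]
    rw [MvPolynomial.mem_restrictDegree] at hp
    refine Finset.sup_le fun s hs => ?_
    have h5 : (s.sum fun _ e => e) = ∑ i : Fin (Fintype.card σ + 1), s i :=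
      Finsupp.sum_fintype s (fun _ e => e) (fun _ => rfl)
    rw [h5]
    calc ∑ i : Fin (Fintype.card σ + 1), s i ≤ ∑ _i : Fin (Fintype.card σ + 1), M :=
          Finset.sum_le_sum fun i _ => hp s hs i
      _ = (Fintype.card σ + 1) * M := by
          rw [Finset.sum_const, Finset.card_univ, Fintype.card_fin, smul_eq_mul]
      _ = (n + 1) * M := by rw [hn]
  have hmaps : ∀ p ∈ restrictTotalDegree (Fin (Fintype.card σ + 1)) K ((n + 1) * M),
      MvPolynomial.aeval f p ∈ restrictTotalDegree σ K (D * ((n + 1) * M)) := by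
    intro p hp
    rw [MvPolynomial.mem_restrictTotalDegree] at hp ⊢
    exact le_trans (totalDegree_aeval_le K f D hDf p) (Nat.mul_le_mul_left _ hp)
  set Φ : restrictTotalDegree (Fin (Fintype.card σ + 1)) K ((n + 1) * M) →ₗ[K]
      restrictTotalDegree σ K (D * ((n + 1) * M)) :=
    LinearMap.restrict (MvPolynomial.aeval f).toLinearMap hmaps with hΦ
  have hΦinj : Function.Injective Φ := by
    intro u v huv
    apply Subtype.ext
    apply hinj
    exact congrArg Subtype.val huv
  have e1 : (M + 1) ^ (n + 1) = finrank K (restrictDegree (Fin (Fintype.card σ + 1)) K M) := by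
    rw [finrank_restrictDegree, Fintype.card_fin, hn]
  have le1 : finrank K (restrictDegree (Fin (Fintype.card σ + 1)) K M)
      ≤ finrank K (restrictTotalDegree (Fin (Fintype.card σ + 1)) K ((n + 1) * M)) :=
    LinearMap.finrank_le_finrank_of_injective
      (f := Submodule.inclusion inc1) (Submodule.inclusion_injective inc1)
  have le2 : finrank K (restrictTotalDegree (Fin (Fintype.card σ + 1)) K ((n + 1) * M))
      ≤ finrank K (restrictTotalDegree σ K (D * ((n + 1) * M))) :=
    LinearMap.finrank_le_finrank_of_injective hΦinj
  have le3 : finrank K (restrictTotalDegree σ K (D * ((n + 1) * M)))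
      ≤ finrank K (restrictDegree σ K (D * ((n + 1) * M))) :=
    LinearMap.finrank_le_finrank_of_injective
      (f := Submodule.inclusion (restrictTotalDegree_le_restrictDegree (σ := σ) (R := K) (D * ((n + 1) * M))))
      (Submodule.inclusion_injective _)
  have e2 : finrank K (restrictDegree σ K (D * ((n + 1) * M)))
      = (D * ((n + 1) * M) + 1) ^ n := by rw [finrank_restrictDegree, hn]
  have big : (M + 1) ^ (n + 1) ≤ (D * ((n + 1) * M) + 1) ^ n := by
    rw [e1, ← e2]; exact le_trans le1 (le_trans le2 le3)
  have step : (D * ((n + 1) * M) + 1) ^ n ≤ (D * (n + 1)) ^ n * (M + 1) ^ n := by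
    rw [← Nat.mul_pow]
    refine Nat.pow_le_pow_left ?_ n
    have hDL : 1 ≤ D * (n + 1) := Nat.one_le_iff_ne_zero.mpr (by positivity)
    calc D * ((n + 1) * M) + 1 = D * (n + 1) * M + 1 := by ring
      _ ≤ D * (n + 1) * M + D * (n + 1) := by omega
      _ = D * (n + 1) * (M + 1) := by ring
  have final : (M + 1) ^ n * (M + 1) ≤ (M + 1) ^ n * M := by
    calc (M + 1) ^ n * (M + 1) = (M + 1) ^ (n + 1) := by rw [pow_succ]
      _ ≤ (D * (n + 1)) ^ n * (M + 1) ^ n := le_trans big step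
      _ = (M + 1) ^ n * M := by rw [hM]; ring
  have hpos : 0 < (M + 1) ^ n := pow_pos (Nat.succ_pos M) n
  have := Nat.le_of_mul_le_mul_left final hpos
  omega
end

section
variable (K : Type*) [Field K]

theorem mvPolynomial_ltSeries_length_le (σ : Type*) [Fintype σ]
    (l : LTSeries (PrimeSpectrum (MvPolynomial σ K))) :
    l.length ≤ Fintype.card σ := by
  classical
  by_contra hcon
  push_neg at hcon
  set n := Fintype.card σ with hn
  have hlen : n + 1 ≤ l.length := hcon
  set R := MvPolynomial σ K
  set q : ℕ → Ideal R := fun i => (l ⟨min i l.length, Nat.lt_succ_of_le (Nat.min_le_right _ _)⟩).asIdeal with hq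
  have hprime : ∀ i ≤ n + 1, (q i).IsPrime := fun i _ => (l _).isPrime
  have hmono : ∀ i ≤ n, q i ≤ q (i + 1) := by
    intro i _
    exact l.strictMono.monotone (by
      simp only [Fin.mk_le_mk]
      exact min_le_min (Nat.le_succ i) le_rfl)
  have hlt : ∀ i ≤ n, q i < q (i + 1) := by
    intro i hi
    have h1 : min i l.length = i := Nat.min_eq_left (le_trans (Nat.le_succ_of_le hi) hlen)
    have h2 : min (i + 1) l.length = i + 1 :=
      Nat.min_eq_left (le_trans (Nat.succ_le_succ hi) hlen)
    exact l.strictMono (by simp only [Fin.mk_lt_mk, h1, h2]; omega)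
  have hex : ∀ i, i ≤ n → ∃ y : R, y ∈ q (i + 1) ∧ y ∉ q i := by
    intro i hi
    obtain ⟨y, hy1, hy2⟩ := SetLike.exists_of_lt (hlt i hi)
    exact ⟨y, hy1, hy2⟩
  set x : ℕ → R := fun i => if h : i ≤ n then (hex i h).choose else 0 with hx
  have hx1 : ∀ i ≤ n, x i ∈ q (i + 1) := by
    intro i hi
    rw [hx]; simp only [dif_pos hi]
    exact (hex i hi).choose_spec.1
  have hx2 : ∀ i ≤ n, x i ∉ q i := by
    intro i hi
    rw [hx]; simp only [dif_pos hi]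
    exact (hex i hi).choose_spec.2
  have hnotindep := not_algebraicIndependent K σ (fun i : Fin (Fintype.card σ + 1) => x (i : ℕ))
  rw [algebraicIndependent_iff] at hnotindep
  push_neg at hnotindep
  obtain ⟨Q, hQ0, hQne⟩ := hnotindep
  obtain ⟨c, hcu, a, k, heq⟩ := exists_cl_relation (K := K) (R := R) n x Q hQne hQ0
  exact cl_chain n q hprime hmono x a k hx1 hx2 c hcu heq

theorem ringKrullDim_mvPolynomial_le (σ : Type*) [Fintype σ] :
    ringKrullDim (MvPolynomial σ K) ≤ (Fintype.card σ : WithBot (WithTop ℕ)) := by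
  rw [ringKrullDim, Order.krullDim]
  exact iSup_le fun p => by
    exact (Nat.cast_le (α := WithBot ℕ∞)).mpr (mvPolynomial_ltSeries_length_le K σ p)
end

section
open MvPolynomial
variable (K : Type*) [Field K] {σ : Type*}

/-- the algebra map killing the variables outside `A`. -/
noncomputable def killOut (A : Set σ) : MvPolynomial σ K →ₐ[K] MvPolynomial A K :=
  MvPolynomial.killCompl (R := K) (Subtype.val_injective (p := (· ∈ A)))

lemma killOut_X_of_not_mem (A : Set σ) {i : σ} (hi : i ∉ A) :
    killOut K A (X i) = 0 := by
  rw [killOut, MvPolynomial.killCompl, aeval_X, dif_neg (by rwa [Subtype.range_val])]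

lemma killOut_rename (A : Set σ) (p : MvPolynomial A K) :
    killOut K A (rename Subtype.val p) = p :=
  MvPolynomial.killCompl_rename_app _ p

lemma killOut_surjective (A : Set σ) : Function.Surjective (killOut K A) :=
  fun p => ⟨rename Subtype.val p, killOut_rename K A p⟩

lemma span_le_ker (A : Set σ) :
    Ideal.span (X '' Aᶜ) ≤ RingHom.ker (killOut K A).toRingHom := by
  rw [Ideal.span_le]
  rintro p ⟨i, hi, rfl⟩
  simp only [SetLike.mem_coe, RingHom.mem_ker]
  exact killOut_X_of_not_mem K A hi

lemma exists_decomp (A : Set σ) (p : MvPolynomial σ K) :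
    ∃ q ∈ MvPolynomial.supported K A, p - q ∈ Ideal.span (X '' Aᶜ) := by
  classical
  induction p using MvPolynomial.induction_on' with
  | monomial u a =>
    by_cases ha : a = 0
    · exact ⟨0, zero_mem _, by simp [ha]⟩
    by_cases h : (↑u.support : Set σ) ⊆ A
    · refine ⟨monomial u a, ?_, by simp⟩
      rw [MvPolynomial.mem_supported, MvPolynomial.vars_monomial ha]
      exact h
    · refine ⟨0, zero_mem _, ?_⟩
      rw [sub_zero, MvPolynomial.mem_ideal_span_X_image]
      intro m hm
      rw [MvPolynomial.support_monomial, if_neg ha, Finset.mem_singleton] at hm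
      subst hm
      obtain ⟨i, hiu, hiA⟩ := Set.not_subset.mp h
      exact ⟨i, hiA, Finsupp.mem_support_iff.mp hiu⟩
  | add p1 p2 h1 h2 =>
    obtain ⟨q1, hq1, hq1'⟩ := h1
    obtain ⟨q2, hq2, hq2'⟩ := h2
    refine ⟨q1 + q2, add_mem hq1 hq2, ?_⟩
    have h3 : p1 + p2 - (q1 + q2) = (p1 - q1) + (p2 - q2) := by ring
    rw [h3]
    exact Ideal.add_mem _ hq1' hq2'

lemma ker_killOut (A : Set σ) :
    RingHom.ker (killOut K A).toRingHom = Ideal.span (X '' Aᶜ) := by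
  refine le_antisymm ?_ (span_le_ker K A)
  intro p hp
  rw [RingHom.mem_ker] at hp
  have hp' : killOut K A p = 0 := hp
  obtain ⟨q, hq, hq'⟩ := exists_decomp K A p
  have h0 : killOut K A (p - q) = 0 := span_le_ker K A hq'
  have hq0 : killOut K A q = 0 := by
    have h2 := map_sub (killOut K A) p q
    rw [h0] at h2
    rw [hp', zero_sub, eq_comm, neg_eq_zero] at h2
    exact h2
  rw [MvPolynomial.supported_eq_range_rename] at hq
  obtain ⟨q', hq'eq0⟩ := hq
  have hq'eq : rename (Subtype.val : A → σ) q' = q := hq'eq0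
  have hq'0 : q' = 0 := by
    have h3 := killOut_rename K A q'
    rw [hq'eq, hq0] at h3
    exact h3.symm
  have : q = 0 := by rw [← hq'eq, hq'0, map_zero]
  rw [this, sub_zero] at hq'
  exact hq'

/-- quotient by the span of the variables outside `A` is polynomials on `A`. -/
noncomputable def quotSpanXEquiv (A : Set σ) :
    (MvPolynomial σ K ⧸ Ideal.span (X '' Aᶜ : Set (MvPolynomial σ K))) ≃+* MvPolynomial A K :=
  (Ideal.quotEquivOfEq (ker_killOut K A).symm).trans
    (RingHom.quotientKerEquivOfSurjective (f := (killOut K A).toRingHom)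
      (killOut_surjective K A))

lemma isPrime_span_X_image (s : Set σ) : (Ideal.span (X '' s : Set (MvPolynomial σ K))).IsPrime := by
  have h1 : s = (sᶜ)ᶜ := (compl_compl s).symm
  haveI : IsDomain (MvPolynomial σ K ⧸ Ideal.span (X '' s : Set (MvPolynomial σ K))) := by
    rw [h1]
    exact (quotSpanXEquiv K sᶜ).toMulEquiv.isDomain (MvPolynomial (sᶜ : Set σ) K)
  exact (Ideal.Quotient.isDomain_iff_prime _).mp inferInstance

lemma X_not_mem_span (s : Set σ) {v : σ} (hv : v ∉ s) :
    (X v : MvPolynomial σ K) ∉ Ideal.span (X '' s : Set (MvPolynomial σ K)) := by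
  intro hmem
  rw [MvPolynomial.mem_ideal_span_X_image] at hmem
  obtain ⟨i, his, hi⟩ := hmem (Finsupp.single v 1) (by
    rw [MvPolynomial.support_X, Finset.mem_singleton])
  have : i = v := by
    by_contra hne
    exact hi (Finsupp.single_eq_of_ne' (Ne.symm hne))
  exact hv (this ▸ his)

theorem le_ringKrullDim_mvPolynomial (σ : Type*) [Fintype σ] :
    (Fintype.card σ : WithBot (WithTop ℕ)) ≤ ringKrullDim (MvPolynomial σ K) := by
  classical
  set n := Fintype.card σ with hn
  set e : Fin n ≃ σ := (Fintype.equivFin σ).symm with he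
  set l : LTSeries (PrimeSpectrum (MvPolynomial σ K)) :=
    ⟨n, fun i => ⟨Ideal.span (X '' (e '' {j : Fin n | (j : ℕ) < (i : ℕ)})),
      isPrime_span_X_image K _⟩, by
      intro i
      show (⟨_, _⟩ : PrimeSpectrum _) < ⟨_, _⟩
      rw [← PrimeSpectrum.asIdeal_lt_asIdeal]
      rw [SetLike.lt_iff_le_and_exists]
      constructor
      · refine Ideal.span_mono (Set.image_mono (Set.image_mono ?_))
        intro j hj
        simp only [Set.mem_setOf_eq, Fin.coe_castSucc] at hj
        simp only [Set.mem_setOf_eq, Fin.val_succ]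
        omega
      · refine ⟨X (e ⟨(i : ℕ), i.isLt⟩), Ideal.subset_span ?_, X_not_mem_span K _ ?_⟩
        · exact Set.mem_image_of_mem _ (Set.mem_image_of_mem _ (by
            simp only [Set.mem_setOf_eq, Fin.val_succ]; omega))
        · rintro ⟨j, hj, hje⟩
          have : j = ⟨(i : ℕ), i.isLt⟩ := e.injective hje
          subst this
          simp only [Set.mem_setOf_eq, Fin.coe_castSucc] at hj
          omega⟩ with hl
  have := Order.LTSeries.length_le_krullDim l
  rw [ringKrullDim]
  exact_mod_cast this

end



open MvPolynomial
end Aux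

open MvPolynomial

/-- The edge ideal of a finite simple graph. -/
noncomputable def edgeIdeal (K : Type) [Field K] {V : Type} (G : SimpleGraph V) :
    Ideal (MvPolynomial V K) :=
  Ideal.span {p | ∃ v w, G.Adj v w ∧ p = X v * X w}

/-- The Hilbert series of `S/I`, where `S = K[x_v : v ∈ σ]`:
the power series whose `d`-th coefficient is the `K`-dimension of the degree-`d`
graded piece of `S/I` (the image of the homogeneous polynomials of degree `d`). -/
noncomputable def hilbertSeries (K : Type) [Field K] {σ : Type} [Fintype σ]
    (I : Ideal (MvPolynomial σ K)) : PowerSeries ℚ :=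
  PowerSeries.mk fun d =>
    (Module.finrank K ((MvPolynomial.homogeneousSubmodule σ K d).map
      (Ideal.Quotient.mkₐ K I).toLinearMap) : ℚ)

/-- Vertices of a Cameron–Walker graph with standard labeling: the `vᵢ`, the `wⱼ`,
the leaves `x^(i)_k` (`1 ≤ k ≤ sᵢ`), and the pendant-triangle vertices
`y^(j)_{ℓ,1}, y^(j)_{ℓ,2}` (`1 ≤ ℓ ≤ tⱼ`). -/
abbrev CWVert (m n : ℕ) (s : Fin m → ℕ) (t : Fin n → ℕ) : Type :=
  Fin m ⊕ Fin n ⊕ (Σ i : Fin m, Fin (s i)) ⊕ (Σ j : Fin n, Fin (t j) × Fin 2)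

def cwRel (m n : ℕ) (s : Fin m → ℕ) (t : Fin n → ℕ) (B : Fin m → Fin n → Prop) :
    CWVert m n s t → CWVert m n s t → Prop
  | Sum.inl i, Sum.inr (Sum.inl j) => B i j
  | Sum.inl i, Sum.inr (Sum.inr (Sum.inl ⟨i', _⟩)) => i = i'
  | Sum.inr (Sum.inl j), Sum.inr (Sum.inr (Sum.inr ⟨j', _, _⟩)) => j = j'
  | Sum.inr (Sum.inr (Sum.inr ⟨j, ℓ, _⟩)), Sum.inr (Sum.inr (Sum.inr ⟨j', ℓ', _⟩)) =>
      j = j' ∧ (ℓ : ℕ) = (ℓ' : ℕ)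
  | _, _ => False

/-- The Cameron–Walker graph determined by the data `m, n, s, t, B`: a bipartite part
on `{v₁,…,v_m} ∪ {w₁,…,w_n}` with edges given by `B`, `s i` leaf edges attached to `vᵢ`,
and `t j` pendant triangles attached to `wⱼ`. -/
def cwGraph (m n : ℕ) (s : Fin m → ℕ) (t : Fin n → ℕ) (B : Fin m → Fin n → Prop) :
    SimpleGraph (CWVert m n s t) :=
  SimpleGraph.fromRel (cwRel m n s t B)

/-- The bipartite part of the Cameron–Walker graph. -/
def bipGraph (m n : ℕ) (B : Fin m → Fin n → Prop) : SimpleGraph (Fin m ⊕ Fin n) :=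
  SimpleGraph.fromRel fun a b =>
    match a, b with
    | Sum.inl i, Sum.inr j => B i j
    | _, _ => False

/-- An independent dominating set: an independent set `A` with `A ∪ N_G(A) = V(G)`. -/
def IsIndepDomSet {V : Type} (G : SimpleGraph V) (A : Finset V) : Prop :=
  (∀ a ∈ A, ∀ b ∈ A, ¬ G.Adj a b) ∧ (∀ v, v ∈ A ∨ ∃ a ∈ A, G.Adj a v)

/-- `i(G)`: the minimum cardinality of an independent dominating set of `G`. -/
noncomputable def indepDomNumber {V : Type} (G : SimpleGraph V) : ℕ :=
  sInf {k | ∃ A : Finset V, IsIndepDomSet G A ∧ A.card = k}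

/-- The independence number: the maximum cardinality of an independent set of `G`. -/
noncomputable def indepNumber {V : Type} [Fintype V] (G : SimpleGraph V) : ℕ :=
  sSup {k | ∃ A : Finset V, (∀ a ∈ A, ∀ b ∈ A, ¬ G.Adj a b) ∧ A.card = k}

/-- The matching number: the maximum cardinality of a matching of `G`. -/
noncomputable def matchingNumber {V : Type} [Fintype V] (G : SimpleGraph V) : ℕ :=
  sSup {k | ∃ M : Finset (Sym2 V), (∀ e ∈ M, e ∈ G.edgeSet) ∧
    (∀ e ∈ M, ∀ e' ∈ M, e ≠ e' → ∀ v, v ∈ e → v ∉ e') ∧ M.card = k}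

section Graph
open MvPolynomial
variable (m n : ℕ) (s : Fin m → ℕ) (t : Fin n → ℕ) (B : Fin m → Fin n → Prop)

/-- block map -/
def blk : CWVert m n s t → Fin m ⊕ Fin n
  | Sum.inl i => Sum.inl i
  | Sum.inr (Sum.inl j) => Sum.inr j
  | Sum.inr (Sum.inr (Sum.inl p)) => Sum.inl p.1
  | Sum.inr (Sum.inr (Sum.inr p)) => Sum.inr p.1

lemma adj_v_leaf (i : Fin m) (k : Fin (s i)) :
    (cwGraph m n s t B).Adj (Sum.inl i) (Sum.inr (Sum.inr (Sum.inl ⟨i, k⟩))) := by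
  rw [cwGraph, SimpleGraph.fromRel_adj]
  exact ⟨by simp, Or.inl (by simp [cwRel])⟩

lemma adj_w_y (j : Fin n) (ℓ : Fin (t j)) (a : Fin 2) :
    (cwGraph m n s t B).Adj (Sum.inr (Sum.inl j)) (Sum.inr (Sum.inr (Sum.inr ⟨j, ℓ, a⟩))) := by
  rw [cwGraph, SimpleGraph.fromRel_adj]
  exact ⟨by simp, Or.inl (by simp [cwRel])⟩

lemma adj_y_y (j : Fin n) (ℓ : Fin (t j)) (a a' : Fin 2) (ha : a ≠ a') :
    (cwGraph m n s t B).Adj (Sum.inr (Sum.inr (Sum.inr ⟨j, ℓ, a⟩)))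
      (Sum.inr (Sum.inr (Sum.inr ⟨j, ℓ, a'⟩))) := by
  rw [cwGraph, SimpleGraph.fromRel_adj]
  refine ⟨by simp [ha], Or.inl (by simp [cwRel])⟩

lemma indep_card_le (hs : ∀ i, 1 ≤ s i) (A : Finset (CWVert m n s t))
    (hind : ∀ a ∈ A, ∀ b ∈ A, ¬ (cwGraph m n s t B).Adj a b) :
    A.card ≤ ∑ i, s i + ∑ j, max (t j) 1 := by
  classical
  rw [Finset.card_eq_sum_card_fiberwise
    (f := blk m n s t) (t := Finset.univ) (fun x _ => Finset.mem_univ _)]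
  rw [Fintype.sum_sum_type]
  refine add_le_add (Finset.sum_le_sum fun i _ => ?_) (Finset.sum_le_sum fun j _ => ?_)
  · -- fiber of inl i
    by_cases hv : (Sum.inl i : CWVert m n s t) ∈ A
    · have hsub : A.filter (fun v => blk m n s t v = Sum.inl i) ⊆ {Sum.inl i} := by
        intro v hv'
        obtain ⟨hvA, hblk⟩ := Finset.mem_filter.mp hv'
        rcases v with i' | j' | p | p
        · simp only [blk, Sum.inl.injEq] at hblk
          simp [hblk]
        · simp [blk] at hblk
        · obtain ⟨i', k⟩ := p
          simp only [blk, Sum.inl.injEq] at hblk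
          subst hblk
          exact absurd (adj_v_leaf m n s t B i' k) (hind _ hv _ hvA)
        · simp [blk] at hblk
      calc (A.filter _).card ≤ ({Sum.inl i} : Finset (CWVert m n s t)).card :=
            Finset.card_le_card hsub
        _ = 1 := Finset.card_singleton _
        _ ≤ s i := hs i
    · have hsub : A.filter (fun v => blk m n s t v = Sum.inl i)
          ⊆ Finset.univ.image (fun k : Fin (s i) => (Sum.inr (Sum.inr (Sum.inl ⟨i, k⟩)) : CWVert m n s t)) := by
        intro v hv'
        obtain ⟨hvA, hblk⟩ := Finset.mem_filter.mp hv'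
        rcases v with i' | j' | p | p
        · simp only [blk, Sum.inl.injEq] at hblk
          subst hblk
          exact absurd hvA hv
        · simp [blk] at hblk
        · obtain ⟨i', k⟩ := p
          simp only [blk, Sum.inl.injEq] at hblk
          subst hblk
          exact Finset.mem_image.mpr ⟨k, Finset.mem_univ _, rfl⟩
        · simp [blk] at hblk
      calc (A.filter _).card
          ≤ (Finset.univ.image (fun k : Fin (s i) => (Sum.inr (Sum.inr (Sum.inl ⟨i, k⟩)) : CWVert m n s t))).card :=
            Finset.card_le_card hsub
        _ ≤ (Finset.univ : Finset (Fin (s i))).card := Finset.card_image_le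
        _ = s i := by simp
  · -- fiber of inr j
    by_cases hv : (Sum.inr (Sum.inl j) : CWVert m n s t) ∈ A
    · have hsub : A.filter (fun v => blk m n s t v = Sum.inr j) ⊆ {Sum.inr (Sum.inl j)} := by
        intro v hv'
        obtain ⟨hvA, hblk⟩ := Finset.mem_filter.mp hv'
        rcases v with i' | j' | p | p
        · simp [blk] at hblk
        · simp only [blk, Sum.inr.injEq] at hblk
          simp [hblk]
        · simp [blk] at hblk
        · obtain ⟨j', ℓ, a⟩ := p
          simp only [blk, Sum.inr.injEq] at hblk
          subst hblk
          exact absurd (adj_w_y m n s t B j' ℓ a) (hind _ hv _ hvA)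
      calc (A.filter _).card ≤ ({Sum.inr (Sum.inl j)} : Finset (CWVert m n s t)).card :=
            Finset.card_le_card hsub
        _ = 1 := Finset.card_singleton _
        _ ≤ max (t j) 1 := le_max_right _ _
    · have hmaps : ∀ v ∈ A.filter (fun v => blk m n s t v = Sum.inr j),
          (match v with
            | Sum.inr (Sum.inr (Sum.inr p)) => (p.2.1 : ℕ)
            | _ => 0) ∈ Finset.range (t j) := by
        intro v hv'
        obtain ⟨hvA, hblk⟩ := Finset.mem_filter.mp hv'
        rcases v with i' | j' | p | p
        · simp [blk] at hblk
        · simp only [blk, Sum.inr.injEq] at hblk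
          subst hblk
          exact absurd hvA hv
        · simp [blk] at hblk
        · obtain ⟨j', ℓ, a⟩ := p
          simp only [blk, Sum.inr.injEq] at hblk
          subst hblk
          exact Finset.mem_range.mpr ℓ.isLt
      have hinj : Set.InjOn (fun v : CWVert m n s t =>
          (match v with
            | Sum.inr (Sum.inr (Sum.inr p)) => (p.2.1 : ℕ)
            | _ => 0)) (A.filter (fun v => blk m n s t v = Sum.inr j)) := by
        intro u hu v hv' huv
        obtain ⟨huA, hublk⟩ := Finset.mem_filter.mp hu
        obtain ⟨hvA, hvblk⟩ := Finset.mem_filter.mp hv'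
        rcases u with i' | j' | p | p
        · simp [blk] at hublk
        · simp only [blk, Sum.inr.injEq] at hublk; subst hublk; exact absurd huA hv
        · simp [blk] at hublk
        rcases v with i'' | j'' | q | q
        · simp [blk] at hvblk
        · simp only [blk, Sum.inr.injEq] at hvblk; subst hvblk; exact absurd hvA hv
        · simp [blk] at hvblk
        obtain ⟨j1, ℓ1, a1⟩ := p
        obtain ⟨j2, ℓ2, a2⟩ := q
        simp only [blk, Sum.inr.injEq] at hublk hvblk
        have hj : j1 = j2 := hublk.trans hvblk.symm
        subst hj
        simp only at huv
        have hℓ : ℓ1 = ℓ2 := Fin.ext huv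
        subst hℓ
        have ha : a1 = a2 := by
          by_contra hne
          exact (hind _ huA _ hvA) (adj_y_y m n s t B j1 ℓ1 a1 a2 hne)
        subst ha
        rfl
      calc (A.filter _).card ≤ (Finset.range (t j)).card :=
            Finset.card_le_card_of_injOn _ hmaps hinj
        _ = t j := Finset.card_range _
        _ ≤ max (t j) 1 := le_max_left _ _

end Graph

section Graph2
open MvPolynomial
variable (m n : ℕ) (s : Fin m → ℕ) (t : Fin n → ℕ) (B : Fin m → Fin n → Prop)

/-- An explicit maximum independent set. -/
noncomputable def lowA : Finset (CWVert m n s t) :=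
  (Finset.univ.image (fun p : (Σ i : Fin m, Fin (s i)) =>
      (Sum.inr (Sum.inr (Sum.inl p)) : CWVert m n s t)))
  ∪ ((Finset.univ.filter (fun j : Fin n => t j = 0)).image
      (fun j => (Sum.inr (Sum.inl j) : CWVert m n s t)))
  ∪ (Finset.univ.image (fun p : (Σ j : Fin n, Fin (t j)) =>
      (Sum.inr (Sum.inr (Sum.inr ⟨p.1, p.2, 0⟩)) : CWVert m n s t)))

lemma mem_lowA_iff (v : CWVert m n s t) :
    v ∈ lowA m n s t ↔
      (∃ p : (Σ i : Fin m, Fin (s i)), v = Sum.inr (Sum.inr (Sum.inl p)))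
      ∨ (∃ j : Fin n, t j = 0 ∧ v = Sum.inr (Sum.inl j))
      ∨ (∃ p : (Σ j : Fin n, Fin (t j)), v = Sum.inr (Sum.inr (Sum.inr ⟨p.1, p.2, 0⟩))) := by
  simp only [lowA, Finset.mem_union, Finset.mem_image, Finset.mem_filter, Finset.mem_univ,
    true_and]
  constructor
  · rintro ((⟨p, rfl⟩ | ⟨j, hj, rfl⟩) | ⟨p, rfl⟩)
    · exact Or.inl ⟨p, rfl⟩
    · exact Or.inr (Or.inl ⟨j, hj, rfl⟩)
    · exact Or.inr (Or.inr ⟨p, rfl⟩)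
  · rintro (⟨p, rfl⟩ | ⟨j, hj, rfl⟩ | ⟨p, rfl⟩)
    · exact Or.inl (Or.inl ⟨p, rfl⟩)
    · exact Or.inl (Or.inr ⟨j, hj, rfl⟩)
    · exact Or.inr ⟨p, rfl⟩

lemma lowA_indep : ∀ a ∈ lowA m n s t, ∀ b ∈ lowA m n s t,
    ¬ (cwGraph m n s t B).Adj a b := by
  have key : ∀ a ∈ lowA m n s t, ∀ b ∈ lowA m n s t, cwRel m n s t B a b → a = b := by
    intro a ha b hb hrel
    rw [mem_lowA_iff] at ha hb
    rcases ha with ⟨p, rfl⟩ | ⟨j, hj, rfl⟩ | ⟨p, rfl⟩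
    · exact absurd hrel (by rcases hb with ⟨q, rfl⟩ | ⟨j', hj', rfl⟩ | ⟨q, rfl⟩ <;> simp [cwRel])
    · rcases hb with ⟨q, rfl⟩ | ⟨j', hj', rfl⟩ | ⟨q, rfl⟩
      · exact absurd hrel (by simp [cwRel])
      · exact absurd hrel (by simp [cwRel])
      · obtain ⟨j2, ℓ2⟩ := q
        simp only [cwRel] at hrel
        subst hrel
        rw [hj] at ℓ2
        exact absurd ℓ2.isLt (by omega)
    · rcases hb with ⟨q, rfl⟩ | ⟨j', hj', rfl⟩ | ⟨q, rfl⟩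
      · exact absurd hrel (by simp [cwRel])
      · exact absurd hrel (by simp [cwRel])
      · obtain ⟨j1, ℓ1⟩ := p
        obtain ⟨j2, ℓ2⟩ := q
        simp only [cwRel] at hrel
        obtain ⟨hj, hℓ⟩ := hrel
        subst hj
        have : ℓ1 = ℓ2 := Fin.ext hℓ
        subst this
        rfl
  intro a ha b hb hadj
  rw [cwGraph, SimpleGraph.fromRel_adj] at hadj
  obtain ⟨hne, hrel | hrel⟩ := hadj
  · exact hne (key a ha b hb hrel)
  · exact hne (key b hb a ha hrel).symm

lemma lowA_card : (lowA m n s t).card = ∑ i, s i + ∑ j, max (t j) 1 := by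
  classical
  have hinj1 : Function.Injective (fun p : (Σ i : Fin m, Fin (s i)) =>
      (Sum.inr (Sum.inr (Sum.inl p)) : CWVert m n s t)) := by
    intro p q h
    simpa using h
  have hinj2 : Function.Injective (fun j : Fin n =>
      (Sum.inr (Sum.inl j) : CWVert m n s t)) := by
    intro p q h
    simpa using h
  have hinj3 : Function.Injective (fun p : (Σ j : Fin n, Fin (t j)) =>
      (Sum.inr (Sum.inr (Sum.inr ⟨p.1, p.2, 0⟩)) : CWVert m n s t)) := by
    rintro ⟨j1, ℓ1⟩ ⟨j2, ℓ2⟩ h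
    simp only [Sum.inr.injEq, Sigma.mk.inj_iff] at h
    obtain ⟨hj, hp⟩ := h
    subst hj
    rw [heq_iff_eq, Prod.mk.injEq] at hp
    rw [hp.1]
  have hd1 : Disjoint
      ((Finset.univ.image (fun p : (Σ i : Fin m, Fin (s i)) =>
        (Sum.inr (Sum.inr (Sum.inl p)) : CWVert m n s t)))
       ∪ ((Finset.univ.filter (fun j : Fin n => t j = 0)).image
        (fun j => (Sum.inr (Sum.inl j) : CWVert m n s t))))
      (Finset.univ.image (fun p : (Σ j : Fin n, Fin (t j)) =>
        (Sum.inr (Sum.inr (Sum.inr ⟨p.1, p.2, 0⟩)) : CWVert m n s t))) := by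
    rw [Finset.disjoint_left]
    intro a ha hb
    simp only [Finset.mem_union, Finset.mem_image, Finset.mem_filter, Finset.mem_univ,
      true_and] at ha hb
    obtain ⟨p, rfl⟩ := hb
    rcases ha with ⟨q, hq⟩ | ⟨j, _, hj⟩
    · simp at hq
    · simp at hj
  have hd2 : Disjoint
      (Finset.univ.image (fun p : (Σ i : Fin m, Fin (s i)) =>
        (Sum.inr (Sum.inr (Sum.inl p)) : CWVert m n s t)))
      ((Finset.univ.filter (fun j : Fin n => t j = 0)).image
        (fun j => (Sum.inr (Sum.inl j) : CWVert m n s t))) := by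
    rw [Finset.disjoint_left]
    intro a ha hb
    simp only [Finset.mem_image, Finset.mem_filter, Finset.mem_univ, true_and] at ha hb
    obtain ⟨p, rfl⟩ := ha
    obtain ⟨j, _, hj⟩ := hb
    simp at hj
  rw [lowA, Finset.card_union_of_disjoint hd1, Finset.card_union_of_disjoint hd2]
  rw [Finset.card_image_of_injective _ hinj1, Finset.card_image_of_injective _ hinj2,
    Finset.card_image_of_injective _ hinj3]
  have c1 : (Finset.univ : Finset (Σ i : Fin m, Fin (s i))).card = ∑ i, s i := by
    rw [Finset.card_univ]
    simp [Fintype.card_sigma]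
  have c3 : (Finset.univ : Finset (Σ j : Fin n, Fin (t j))).card = ∑ j, t j := by
    rw [Finset.card_univ]
    simp [Fintype.card_sigma]
  rw [c1, c3]
  have c2 : ∀ j : Fin n, max (t j) 1 = t j + (if t j = 0 then 1 else 0) := by
    intro j
    by_cases h : t j = 0 <;> simp [h] <;> omega
  have : ∑ j, max (t j) 1 = ∑ j, t j + (Finset.univ.filter (fun j : Fin n => t j = 0)).card := by
    rw [Finset.sum_congr rfl (fun j _ => c2 j), Finset.sum_add_distrib]
    congr 1
    rw [Finset.sum_boole]
    simp
  rw [this]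
  ring
end Graph2


/-- For a Cameron–Walker graph `G` (set_option maxHeartbeats 1000000 in
bipartite part on `{v₁,…,v_m} ∪ {w₁,…,w_n}`, with
`sᵢ ≥ 1` leaf edges at each `vᵢ` and `tⱼ ≥ 0` pendant triangles at each `wⱼ`),
`dim K[V(G)]/I(G) = ∑ sᵢ + ∑ max{tⱼ, 1}`. -/
theorem cwGraph_dim (K : Type) [Field K] (m n : ℕ) (s : Fin m → ℕ) (t : Fin n → ℕ)
    (B : Fin m → Fin n → Prop) (hm : 1 ≤ m) (hn : 1 ≤ n) (hs : ∀ i, 1 ≤ s i)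
    (hconn : (bipGraph m n B).Connected) :
    ringKrullDim (MvPolynomial (CWVert m n s t) K ⧸ edgeIdeal K (cwGraph m n s t B)) =
      ((∑ i, s i + ∑ j, max (t j) 1 : ℕ) : ℕ) := by
  classical
  set N := ∑ i, s i + ∑ j, max (t j) 1 with hN
  -- LOWER BOUND
  have hlow : (N : WithBot (WithTop ℕ))
      ≤ ringKrullDim (MvPolynomial (CWVert m n s t) K ⧸ edgeIdeal K (cwGraph m n s t B)) := by
    set A : Set (CWVert m n s t) := {v | v ∈ lowA m n s t} with hA
    have hker : edgeIdeal K (cwGraph m n s t B) ≤ RingHom.ker (killOut K A).toRingHom := by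
      rw [edgeIdeal, Ideal.span_le]
      rintro p ⟨v, w, hadj, rfl⟩
      simp only [SetLike.mem_coe, RingHom.mem_ker]
      have hvw : v ∉ A ∨ w ∉ A := by
        by_contra hc
        push_neg at hc
        exact lowA_indep m n s t B v hc.1 w hc.2 hadj
      have hmul : (killOut K A).toRingHom (X v * X w)
          = killOut K A (X v) * killOut K A (X w) := map_mul _ _ _
      rcases hvw with h | h
      · rw [hmul, killOut_X_of_not_mem K A h, zero_mul]
      · rw [hmul, killOut_X_of_not_mem K A h, mul_zero]
    have hsurj : Function.Surjective
        (Ideal.Quotient.lift (edgeIdeal K (cwGraph m n s t B))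
          (killOut K A).toRingHom (fun a ha => RingHom.mem_ker.mp (hker ha))) := by
      intro y
      obtain ⟨x, hx⟩ := killOut_surjective K A y
      exact ⟨Ideal.Quotient.mk _ x, by rwa [Ideal.Quotient.lift_mk]⟩
    have h1 := ringKrullDim_le_of_surjective _ hsurj
    have h2 := le_ringKrullDim_mvPolynomial K ↥A
    have hcard : Fintype.card ↥A = N := by
      rw [hN, ← lowA_card m n s t, ← Fintype.card_coe (lowA m n s t)]
      exact Fintype.card_congr (Equiv.subtypeEquivRight (fun v => Iff.rfl))
    rw [hcard] at h2
    exact le_trans h2 h1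
  -- UPPER BOUND
  have hup : ringKrullDim (MvPolynomial (CWVert m n s t) K ⧸ edgeIdeal K (cwGraph m n s t B))
      ≤ (N : WithBot (WithTop ℕ)) := by
    rw [ringKrullDim, Order.krullDim]
    refine iSup_le fun l => ?_
    suffices h : l.length ≤ N by exact (Nat.cast_le (α := WithBot ℕ∞)).mpr h
    set P : Fin (l.length + 1) → Ideal (MvPolynomial (CWVert m n s t) K) :=
      fun i => Ideal.comap (Ideal.Quotient.mk (edgeIdeal K (cwGraph m n s t B))) (l i).asIdeal
      with hP
    have hPprime : ∀ i, (P i).IsPrime := fun i => by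
      haveI := (l i).isPrime
      rw [hP]
      exact Ideal.IsPrime.comap _
    have hPmono : ∀ i j : Fin (l.length + 1), i ≤ j → P i ≤ P j := fun i j hij =>
      Ideal.comap_mono ((PrimeSpectrum.asIdeal_le_asIdeal _ _).mpr (l.monotone hij))
    have hPstrict : ∀ i j : Fin (l.length + 1), i < j → P i < P j := by
      intro i j hij
      refine lt_of_le_of_ne (hPmono i j (le_of_lt hij)) fun heq => ?_
      have hinj := Ideal.comap_injective_of_surjective
        (Ideal.Quotient.mk (edgeIdeal K (cwGraph m n s t B))) Ideal.Quotient.mk_surjective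
      have : (l i).asIdeal = (l j).asIdeal := hinj heq
      have : l i = l j := PrimeSpectrum.ext this
      exact (ne_of_lt (l.strictMono hij)) this
    have hIP0 : edgeIdeal K (cwGraph m n s t B) ≤ P 0 := by
      intro x hx
      show Ideal.Quotient.mk _ x ∈ (l 0).asIdeal
      rw [Ideal.Quotient.eq_zero_iff_mem.mpr hx]
      exact zero_mem _
    set A : Set (CWVert m n s t) := {v | X v ∈ P 0}ᶜ with hA
    -- A is independent
    have hAfin_ind : ∀ a ∈ Finset.univ.filter (· ∈ A), ∀ b ∈ Finset.univ.filter (· ∈ A),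
        ¬ (cwGraph m n s t B).Adj a b := by
      intro a ha b hb hadj
      have haA : a ∈ A := (Finset.mem_filter.mp ha).2
      have hbA : b ∈ A := (Finset.mem_filter.mp hb).2
      have hmem : (X a * X b : MvPolynomial (CWVert m n s t) K) ∈ P 0 :=
        hIP0 (Ideal.subset_span ⟨a, b, hadj, rfl⟩)
      rcases (hPprime 0).mem_or_mem hmem with h | h
      · exact haA h
      · exact hbA h
    have hcardA : Fintype.card ↥A ≤ N := by
      rw [Fintype.card_subtype]
      exact indep_card_le m n s t B hs _ hAfin_ind
    set J : Ideal (MvPolynomial (CWVert m n s t) K) := Ideal.span (X '' Aᶜ) with hJ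
    have hJP : ∀ i, J ≤ P i := by
      intro i
      rw [hJ, Ideal.span_le]
      rintro p ⟨v, hv, rfl⟩
      rw [hA, compl_compl] at hv
      exact SetLike.mem_coe.mpr (hPmono 0 i (Fin.zero_le i) hv)
    have hJker : RingHom.ker (Ideal.Quotient.mk J) = J := Ideal.mk_ker
    set l2 : LTSeries (PrimeSpectrum (MvPolynomial (CWVert m n s t) K ⧸ J)) :=
      ⟨l.length, fun i => ⟨(P i).map (Ideal.Quotient.mk J), by
          haveI := hPprime i
          exact Ideal.map_isPrime_of_surjective Ideal.Quotient.mk_surjective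
            (by rw [hJker]; exact hJP i)⟩, by
        intro i
        show (⟨_, _⟩ : PrimeSpectrum _) < ⟨_, _⟩
        rw [← PrimeSpectrum.asIdeal_lt_asIdeal]
        have hlt := hPstrict i.castSucc i.succ (by simp [Fin.lt_def])
        refine lt_of_le_of_ne (Ideal.map_mono (le_of_lt hlt)) fun heq => ?_
        have hcomap := congrArg (Ideal.comap (Ideal.Quotient.mk J)) heq
        rw [Ideal.comap_map_of_surjective _ Ideal.Quotient.mk_surjective,
          Ideal.comap_map_of_surjective _ Ideal.Quotient.mk_surjective] at hcomap
        have hbot : Ideal.comap (Ideal.Quotient.mk J) ⊥ = J := by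
          rw [← RingHom.ker_eq_comap_bot]; exact hJker
        rw [hbot, sup_eq_left.mpr (hJP _), sup_eq_left.mpr (hJP _)] at hcomap
        exact (ne_of_lt hlt) hcomap⟩ with hl2
    have hlen := Order.LTSeries.length_le_krullDim l2
    have heq1 : ringKrullDim (MvPolynomial (CWVert m n s t) K ⧸ J)
        = ringKrullDim (MvPolynomial ↥A K) := by
      rw [hJ]
      exact ringKrullDim_eq_of_ringEquiv (quotSpanXEquiv K A)
    have hle2 : ringKrullDim (MvPolynomial ↥A K) ≤ (Fintype.card ↥A : WithBot (WithTop ℕ)) :=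
      ringKrullDim_mvPolynomial_le K ↥A
    have hfinal : (l.length : WithBot (WithTop ℕ)) ≤ (N : WithBot (WithTop ℕ)) := by
      have h3 : (l2.length : WithBot (WithTop ℕ)) ≤ (N : WithBot (WithTop ℕ)) := by
        calc (l2.length : WithBot ℕ∞) ≤ Order.krullDim _ := hlen
          _ = ringKrullDim (MvPolynomial (CWVert m n s t) K ⧸ J) := rfl
          _ = ringKrullDim (MvPolynomial ↥A K) := heq1
          _ ≤ (Fintype.card ↥A : WithBot ℕ∞) := hle2
          _ ≤ (N : WithBot ℕ∞) := by exact_mod_cast hcardA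
      exact h3
    exact (Nat.cast_le (α := WithBot ℕ∞)).mp hfinal
  exact le_antisymm hup hlow
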